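/- Let f1, f2 : ℝ → ℝ be C¹ and let p1, p2 : ℝ → ℝ be polynomial functions of degree at most 3; set u(x,y) = f1(x)·p1(y) + f2(y)·p2(x). Let P be the bicubic Hermite corner interpolant on the unit square of u and let s be the Hermite transfinite boundary interpolant on the unit square of u − P. Then u(x,y) = s(x,y) + P(x,y) for all (x,y) ∈ [0,1]². -/

import Mathlib

/-- Cubic Hermite basis functions on `[0,1]`. -/
noncomputable def H0 (x : ℝ) : ℝ := (1 - x) ^ 2 * (1 + 2 * x)
noncomputable def H1 (x : ℝ) : ℝ := x ^ 2 * (3 - 2 * x)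
noncomputable def G0 (x : ℝ) : ℝ := x * (1 - x) ^ 2
noncomputable def G1 (x : ℝ) : ℝ := x ^ 2 * (x - 1)

/-- Partial derivative in the first variable. -/
noncomputable def pdx (v : ℝ → ℝ → ℝ) (x y : ℝ) : ℝ := deriv (fun t => v t y) x

/-- Partial derivative in the second variable. -/
noncomputable def pdy (v : ℝ → ℝ → ℝ) (x y : ℝ) : ℝ := deriv (fun t => v x t) y

/-- Mixed second partial derivative `∂²v/∂x∂y`. -/
noncomputable def pdxy (v : ℝ → ℝ → ℝ) (x y : ℝ) : ℝ := pdx (fun a b => pdy v a b) x y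

/-- The bicubic Hermite corner interpolant on the unit square. -/
noncomputable def bicubicCorner (u : ℝ → ℝ → ℝ) (x y : ℝ) : ℝ :=
    H0 x * H0 y * u 0 0 + H0 x * H1 y * u 0 1
  + H1 x * H0 y * u 1 0 + H1 x * H1 y * u 1 1
  + G0 x * H0 y * pdx u 0 0 + G0 x * H1 y * pdx u 0 1
  + G1 x * H0 y * pdx u 1 0 + G1 x * H1 y * pdx u 1 1
  + H0 x * G0 y * pdy u 0 0 + H0 x * G1 y * pdy u 0 1
  + H1 x * G0 y * pdy u 1 0 + H1 x * G1 y * pdy u 1 1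
  + G0 x * G0 y * pdxy u 0 0 + G0 x * G1 y * pdxy u 0 1
  + G1 x * G0 y * pdxy u 1 0 + G1 x * G1 y * pdxy u 1 1

/-- The Hermite transfinite boundary interpolant on the unit square. -/
noncomputable def hermiteTransfinite (v : ℝ → ℝ → ℝ) (x y : ℝ) : ℝ :=
    H0 x * v 0 y + H1 x * v 1 y + H0 y * v x 0 + H1 y * v x 1
  + G0 x * pdx v 0 y + G1 x * pdx v 1 y + G0 y * pdy v x 0 + G1 y * pdy v x 1



lemma hasDerivAt_cubic (a b c d x : ℝ) :
    HasDerivAt (fun t : ℝ => a*t^3 + b*t^2 + c*t + d) (3*a*x^2 + 2*b*x + c) x := by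
  have h3 := (hasDerivAt_pow 3 x).const_mul a
  have h2 := (hasDerivAt_pow 2 x).const_mul b
  have h1 := (hasDerivAt_id x).const_mul c
  have h := ((h3.add h2).add h1).add_const d
  refine h.congr_deriv ?_
  push_cast; ring

lemma hasDerivAt_H0 (x : ℝ) : HasDerivAt H0 (6*x^2 - 6*x) x := by
  have e : H0 = fun t => 2*t^3 + (-3)*t^2 + 0*t + 1 := by
    funext t; simp only [H0]; ring
  rw [e]; convert hasDerivAt_cubic 2 (-3) 0 1 x using 1; ring

lemma hasDerivAt_H1 (x : ℝ) : HasDerivAt H1 (6*x - 6*x^2) x := by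
  have e : H1 = fun t => (-2)*t^3 + 3*t^2 + 0*t + 0 := by
    funext t; simp only [H1]; ring
  rw [e]; convert hasDerivAt_cubic (-2) 3 0 0 x using 1; ring

lemma hasDerivAt_G0 (x : ℝ) : HasDerivAt G0 (3*x^2 - 4*x + 1) x := by
  have e : G0 = fun t => 1*t^3 + (-2)*t^2 + 1*t + 0 := by
    funext t; simp only [G0]; ring
  rw [e]; convert hasDerivAt_cubic 1 (-2) 1 0 x using 1; ring

lemma hasDerivAt_G1 (x : ℝ) : HasDerivAt G1 (3*x^2 - 2*x) x := by
  have e : G1 = fun t => 1*t^3 + (-1)*t^2 + 0*t + 0 := by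
    funext t; simp only [G1]; ring
  rw [e]; convert hasDerivAt_cubic 1 (-1) 0 0 x using 1; ring

lemma cubic_repro (p : Polynomial ℝ) (hp : p.degree ≤ 3) (t : ℝ) :
    p.eval t = H0 t * p.eval 0 + H1 t * p.eval 1
      + G0 t * p.derivative.eval 0 + G1 t * p.derivative.eval 1 := by
  have hnd : p.natDegree ≤ 3 := Polynomial.natDegree_le_iff_degree_le.mpr hp
  have h4 : p.natDegree < 4 := by omega
  have h4' : p.derivative.natDegree < 4 :=
    lt_of_le_of_lt (Polynomial.natDegree_derivative_le p) (by omega)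
  rw [Polynomial.eval_eq_sum_range' h4 t, Polynomial.eval_eq_sum_range' h4 (0:ℝ),
    Polynomial.eval_eq_sum_range' h4 (1:ℝ), Polynomial.eval_eq_sum_range' h4' (0:ℝ),
    Polynomial.eval_eq_sum_range' h4' (1:ℝ)]
  have hc4 : p.coeff 4 = 0 := Polynomial.coeff_eq_zero_of_natDegree_lt (by omega)
  simp [Finset.sum_range_succ, Polynomial.coeff_derivative, hc4, H0, H1, G0, G1]
  ring

lemma bicubic_hasDerivAt_x (u : ℝ → ℝ → ℝ) (a b : ℝ) :
    HasDerivAt (fun t => bicubicCorner u t b)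
      ( (6*a^2-6*a) * H0 b * u 0 0 + (6*a^2-6*a) * H1 b * u 0 1
      + (6*a-6*a^2) * H0 b * u 1 0 + (6*a-6*a^2) * H1 b * u 1 1
      + (3*a^2-4*a+1) * H0 b * pdx u 0 0 + (3*a^2-4*a+1) * H1 b * pdx u 0 1
      + (3*a^2-2*a) * H0 b * pdx u 1 0 + (3*a^2-2*a) * H1 b * pdx u 1 1
      + (6*a^2-6*a) * G0 b * pdy u 0 0 + (6*a^2-6*a) * G1 b * pdy u 0 1
      + (6*a-6*a^2) * G0 b * pdy u 1 0 + (6*a-6*a^2) * G1 b * pdy u 1 1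
      + (3*a^2-4*a+1) * G0 b * pdxy u 0 0 + (3*a^2-4*a+1) * G1 b * pdxy u 0 1
      + (3*a^2-2*a) * G0 b * pdxy u 1 0 + (3*a^2-2*a) * G1 b * pdxy u 1 1) a := by
  unfold bicubicCorner
  have t0 := ((hasDerivAt_H0 a).mul_const (H0 b)).mul_const (u 0 0)
  have t1 := ((hasDerivAt_H0 a).mul_const (H1 b)).mul_const (u 0 1)
  have t2 := ((hasDerivAt_H1 a).mul_const (H0 b)).mul_const (u 1 0)
  have t3 := ((hasDerivAt_H1 a).mul_const (H1 b)).mul_const (u 1 1)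
  have t4 := ((hasDerivAt_G0 a).mul_const (H0 b)).mul_const (pdx u 0 0)
  have t5 := ((hasDerivAt_G0 a).mul_const (H1 b)).mul_const (pdx u 0 1)
  have t6 := ((hasDerivAt_G1 a).mul_const (H0 b)).mul_const (pdx u 1 0)
  have t7 := ((hasDerivAt_G1 a).mul_const (H1 b)).mul_const (pdx u 1 1)
  have t8 := ((hasDerivAt_H0 a).mul_const (G0 b)).mul_const (pdy u 0 0)
  have t9 := ((hasDerivAt_H0 a).mul_const (G1 b)).mul_const (pdy u 0 1)
  have t10 := ((hasDerivAt_H1 a).mul_const (G0 b)).mul_const (pdy u 1 0)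
  have t11 := ((hasDerivAt_H1 a).mul_const (G1 b)).mul_const (pdy u 1 1)
  have t12 := ((hasDerivAt_G0 a).mul_const (G0 b)).mul_const (pdxy u 0 0)
  have t13 := ((hasDerivAt_G0 a).mul_const (G1 b)).mul_const (pdxy u 0 1)
  have t14 := ((hasDerivAt_G1 a).mul_const (G0 b)).mul_const (pdxy u 1 0)
  have t15 := ((hasDerivAt_G1 a).mul_const (G1 b)).mul_const (pdxy u 1 1)
  exact (((((((((((((((t0.add t1).add t2).add t3).add t4).add t5).add t6).add t7).add t8).add t9).add t10).add t11).add t12).add t13).add t14).add t15)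

lemma bicubic_hasDerivAt_y (u : ℝ → ℝ → ℝ) (a b : ℝ) :
    HasDerivAt (fun t => bicubicCorner u a t)
      ( H0 a * (6*b^2-6*b) * u 0 0 + H0 a * (6*b-6*b^2) * u 0 1
      + H1 a * (6*b^2-6*b) * u 1 0 + H1 a * (6*b-6*b^2) * u 1 1
      + G0 a * (6*b^2-6*b) * pdx u 0 0 + G0 a * (6*b-6*b^2) * pdx u 0 1
      + G1 a * (6*b^2-6*b) * pdx u 1 0 + G1 a * (6*b-6*b^2) * pdx u 1 1
      + H0 a * (3*b^2-4*b+1) * pdy u 0 0 + H0 a * (3*b^2-2*b) * pdy u 0 1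
      + H1 a * (3*b^2-4*b+1) * pdy u 1 0 + H1 a * (3*b^2-2*b) * pdy u 1 1
      + G0 a * (3*b^2-4*b+1) * pdxy u 0 0 + G0 a * (3*b^2-2*b) * pdxy u 0 1
      + G1 a * (3*b^2-4*b+1) * pdxy u 1 0 + G1 a * (3*b^2-2*b) * pdxy u 1 1) b := by
  unfold bicubicCorner
  have t0 := ((hasDerivAt_H0 b).const_mul (H0 a)).mul_const (u 0 0)
  have t1 := ((hasDerivAt_H1 b).const_mul (H0 a)).mul_const (u 0 1)
  have t2 := ((hasDerivAt_H0 b).const_mul (H1 a)).mul_const (u 1 0)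
  have t3 := ((hasDerivAt_H1 b).const_mul (H1 a)).mul_const (u 1 1)
  have t4 := ((hasDerivAt_H0 b).const_mul (G0 a)).mul_const (pdx u 0 0)
  have t5 := ((hasDerivAt_H1 b).const_mul (G0 a)).mul_const (pdx u 0 1)
  have t6 := ((hasDerivAt_H0 b).const_mul (G1 a)).mul_const (pdx u 1 0)
  have t7 := ((hasDerivAt_H1 b).const_mul (G1 a)).mul_const (pdx u 1 1)
  have t8 := ((hasDerivAt_G0 b).const_mul (H0 a)).mul_const (pdy u 0 0)
  have t9 := ((hasDerivAt_G1 b).const_mul (H0 a)).mul_const (pdy u 0 1)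
  have t10 := ((hasDerivAt_G0 b).const_mul (H1 a)).mul_const (pdy u 1 0)
  have t11 := ((hasDerivAt_G1 b).const_mul (H1 a)).mul_const (pdy u 1 1)
  have t12 := ((hasDerivAt_G0 b).const_mul (G0 a)).mul_const (pdxy u 0 0)
  have t13 := ((hasDerivAt_G1 b).const_mul (G0 a)).mul_const (pdxy u 0 1)
  have t14 := ((hasDerivAt_G0 b).const_mul (G1 a)).mul_const (pdxy u 1 0)
  have t15 := ((hasDerivAt_G1 b).const_mul (G1 a)).mul_const (pdxy u 1 1)
  exact (((((((((((((((t0.add t1).add t2).add t3).add t4).add t5).add t6).add t7).add t8).add t9).add t10).add t11).add t12).add t13).add t14).add t15)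




set_option maxHeartbeats 2000000 in
/-- Core of the proof of Theorem 3.2: for `u(x,y) = f1(x)p1(y) + f2(y)p2(x)` with
`deg p1, deg p2 ≤ 3`, the deterministic part `s + P` reproduces `u` on the unit square. -/
theorem hermite_deterministic_part_reproduces_u
    (f1 f2 : ℝ → ℝ) (hf1 : ContDiff ℝ 1 f1) (hf2 : ContDiff ℝ 1 f2)
    (p1 p2 : Polynomial ℝ) (hp1 : p1.degree ≤ 3) (hp2 : p2.degree ≤ 3)
    (u : ℝ → ℝ → ℝ)
    (hu : ∀ x y : ℝ, u x y = f1 x * p1.eval y + f2 y * p2.eval x)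
    (P : ℝ → ℝ → ℝ) (hP : ∀ x y : ℝ, P x y = bicubicCorner u x y)
    (s : ℝ → ℝ → ℝ)
    (hs : ∀ x y : ℝ, s x y = hermiteTransfinite (fun a b => u a b - P a b) x y) :
    ∀ x ∈ Set.Icc (0 : ℝ) 1, ∀ y ∈ Set.Icc (0 : ℝ) 1,
      u x y = s x y + P x y := by
  intro x hx y hy
  have hf1d : ∀ t : ℝ, HasDerivAt f1 (deriv f1 t) t :=
    fun t => (hf1.differentiable one_ne_zero t).hasDerivAt
  have hf2d : ∀ t : ℝ, HasDerivAt f2 (deriv f2 t) t :=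
    fun t => (hf2.differentiable one_ne_zero t).hasDerivAt
  have hu' : u = fun a b => f1 a * p1.eval b + f2 b * p2.eval a := by
    funext a b; exact hu a b
  have hP' : P = fun a b => bicubicCorner u a b := by funext a b; exact hP a b
  have hux : ∀ a b : ℝ, HasDerivAt (fun t => u t b)
      (deriv f1 a * p1.eval b + f2 b * p2.derivative.eval a) a := by
    intro a b
    rw [hu']
    exact ((hf1d a).mul_const (p1.eval b)).add ((p2.hasDerivAt a).const_mul (f2 b))
  have huy : ∀ a b : ℝ, HasDerivAt (fun t => u a t)
      (f1 a * p1.derivative.eval b + deriv f2 b * p2.eval a) b := by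
    intro a b
    rw [hu']
    exact ((p1.hasDerivAt b).const_mul (f1 a)).add ((hf2d b).mul_const (p2.eval a))
  have hpdx : ∀ a b : ℝ, pdx u a b = deriv f1 a * p1.eval b + f2 b * p2.derivative.eval a :=
    fun a b => (hux a b).deriv
  have hpdy : ∀ a b : ℝ, pdy u a b = f1 a * p1.derivative.eval b + deriv f2 b * p2.eval a :=
    fun a b => (huy a b).deriv
  have hpdxy : ∀ a b : ℝ, pdxy u a b
      = deriv f1 a * p1.derivative.eval b + deriv f2 b * p2.derivative.eval a := by
    intro a b
    have he : (fun t => pdy u t b)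
        = fun t => f1 t * p1.derivative.eval b + deriv f2 b * p2.eval t := by
      funext t; exact hpdy t b
    show deriv (fun t => pdy u t b) a = _
    rw [he]
    exact (((hf1d a).mul_const (p1.derivative.eval b)).add
      ((p2.hasDerivAt a).const_mul (deriv f2 b))).deriv
  have hPx : ∀ a b : ℝ, HasDerivAt (fun t => P t b)
      ( (6*a^2-6*a) * H0 b * u 0 0 + (6*a^2-6*a) * H1 b * u 0 1
      + (6*a-6*a^2) * H0 b * u 1 0 + (6*a-6*a^2) * H1 b * u 1 1
      + (3*a^2-4*a+1) * H0 b * pdx u 0 0 + (3*a^2-4*a+1) * H1 b * pdx u 0 1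
      + (3*a^2-2*a) * H0 b * pdx u 1 0 + (3*a^2-2*a) * H1 b * pdx u 1 1
      + (6*a^2-6*a) * G0 b * pdy u 0 0 + (6*a^2-6*a) * G1 b * pdy u 0 1
      + (6*a-6*a^2) * G0 b * pdy u 1 0 + (6*a-6*a^2) * G1 b * pdy u 1 1
      + (3*a^2-4*a+1) * G0 b * pdxy u 0 0 + (3*a^2-4*a+1) * G1 b * pdxy u 0 1
      + (3*a^2-2*a) * G0 b * pdxy u 1 0 + (3*a^2-2*a) * G1 b * pdxy u 1 1) a := by
    intro a b; rw [hP']; exact bicubic_hasDerivAt_x u a b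
  have hPy : ∀ a b : ℝ, HasDerivAt (fun t => P a t)
      ( H0 a * (6*b^2-6*b) * u 0 0 + H0 a * (6*b-6*b^2) * u 0 1
      + H1 a * (6*b^2-6*b) * u 1 0 + H1 a * (6*b-6*b^2) * u 1 1
      + G0 a * (6*b^2-6*b) * pdx u 0 0 + G0 a * (6*b-6*b^2) * pdx u 0 1
      + G1 a * (6*b^2-6*b) * pdx u 1 0 + G1 a * (6*b-6*b^2) * pdx u 1 1
      + H0 a * (3*b^2-4*b+1) * pdy u 0 0 + H0 a * (3*b^2-2*b) * pdy u 0 1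
      + H1 a * (3*b^2-4*b+1) * pdy u 1 0 + H1 a * (3*b^2-2*b) * pdy u 1 1
      + G0 a * (3*b^2-4*b+1) * pdxy u 0 0 + G0 a * (3*b^2-2*b) * pdxy u 0 1
      + G1 a * (3*b^2-4*b+1) * pdxy u 1 0 + G1 a * (3*b^2-2*b) * pdxy u 1 1) b := by
    intro a b; rw [hP']; exact bicubic_hasDerivAt_y u a b
  have hvx : ∀ a b : ℝ, pdx (fun c d => u c d - P c d) a b
      = (deriv f1 a * p1.eval b + f2 b * p2.derivative.eval a)
      - ( (6*a^2-6*a) * H0 b * u 0 0 + (6*a^2-6*a) * H1 b * u 0 1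
      + (6*a-6*a^2) * H0 b * u 1 0 + (6*a-6*a^2) * H1 b * u 1 1
      + (3*a^2-4*a+1) * H0 b * pdx u 0 0 + (3*a^2-4*a+1) * H1 b * pdx u 0 1
      + (3*a^2-2*a) * H0 b * pdx u 1 0 + (3*a^2-2*a) * H1 b * pdx u 1 1
      + (6*a^2-6*a) * G0 b * pdy u 0 0 + (6*a^2-6*a) * G1 b * pdy u 0 1
      + (6*a-6*a^2) * G0 b * pdy u 1 0 + (6*a-6*a^2) * G1 b * pdy u 1 1
      + (3*a^2-4*a+1) * G0 b * pdxy u 0 0 + (3*a^2-4*a+1) * G1 b * pdxy u 0 1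
      + (3*a^2-2*a) * G0 b * pdxy u 1 0 + (3*a^2-2*a) * G1 b * pdxy u 1 1) := by
    intro a b; exact ((hux a b).sub (hPx a b)).deriv
  have hvy : ∀ a b : ℝ, pdy (fun c d => u c d - P c d) a b
      = (f1 a * p1.derivative.eval b + deriv f2 b * p2.eval a)
      - ( H0 a * (6*b^2-6*b) * u 0 0 + H0 a * (6*b-6*b^2) * u 0 1
      + H1 a * (6*b^2-6*b) * u 1 0 + H1 a * (6*b-6*b^2) * u 1 1
      + G0 a * (6*b^2-6*b) * pdx u 0 0 + G0 a * (6*b-6*b^2) * pdx u 0 1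
      + G1 a * (6*b^2-6*b) * pdx u 1 0 + G1 a * (6*b-6*b^2) * pdx u 1 1
      + H0 a * (3*b^2-4*b+1) * pdy u 0 0 + H0 a * (3*b^2-2*b) * pdy u 0 1
      + H1 a * (3*b^2-4*b+1) * pdy u 1 0 + H1 a * (3*b^2-2*b) * pdy u 1 1
      + G0 a * (3*b^2-4*b+1) * pdxy u 0 0 + G0 a * (3*b^2-2*b) * pdxy u 0 1
      + G1 a * (3*b^2-4*b+1) * pdxy u 1 0 + G1 a * (3*b^2-2*b) * pdxy u 1 1) := by
    intro a b; exact ((huy a b).sub (hPy a b)).deriv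
  rw [hs x y, hP x y]
  simp only [hermiteTransfinite]
  simp only [hvx, hvy]
  simp only [hP, bicubicCorner]
  simp only [hpdx, hpdy, hpdxy, hu]
  rw [cubic_repro p1 hp1 y, cubic_repro p2 hp2 x]
  simp only [H0, H1, G0, G1]
  ring
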